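/- Let a > 0, let Ω ⊂ ℝ² be a bounded set contained in the strip (-R,R) × ℝ, and let 0 < δ < 1. If 0 < γ < δ e^{-(π/a)(R - 1/(2a))}, then for all (x,ω) ∈ Ω, (1-δ)^p |𝒢φ(x,ω)|^p ≤ |𝒢f_±(x,ω)|^p ≤ (1+δ)^p |𝒢φ(x,ω)|^p, where f_± = φ ± i γ T_{1/a} φ. -/

import Mathlib

open MeasureTheory

/-- The Gabor transform with Gaussian window. -/
noncomputable def gabor (f : ℝ → ℂ) (x ω : ℝ) : ℂ :=
  (2 : ℂ) ^ ((1 : ℂ) / 4) *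
    ∫ t : ℝ, f t * Complex.exp (-(Real.pi : ℂ) * ((t : ℂ) - (x : ℂ)) ^ 2) *
      Complex.exp (-2 * (Real.pi : ℂ) * Complex.I * (t : ℂ) * (ω : ℂ))

/-- The normalized Gaussian φ(t) = 2^{1/4} e^{-π t²}. -/
noncomputable def gauss (t : ℝ) : ℂ :=
  (2 : ℂ) ^ ((1 : ℂ) / 4) * Complex.exp (-(Real.pi : ℂ) * (t : ℂ) ^ 2)

lemma hb_neg : ((-2 * (Real.pi : ℂ))).re < 0 := by
  simp [Real.pi_pos]

lemma integrand_eq (s x ω t : ℝ) :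
    gauss (t - s) * Complex.exp (-(Real.pi : ℂ) * ((t : ℂ) - (x : ℂ)) ^ 2) *
      Complex.exp (-2 * (Real.pi : ℂ) * Complex.I * (t : ℂ) * (ω : ℂ)) =
    (2 : ℂ) ^ ((1 : ℂ) / 4) *
      Complex.exp ((-2 * (Real.pi : ℂ)) * (t : ℂ) ^ 2 +
        (2 * (Real.pi : ℂ) * s + 2 * Real.pi * x - 2 * Real.pi * Complex.I * ω) * t +
        (-(Real.pi : ℂ) * s ^ 2 - Real.pi * x ^ 2)) := by
  simp only [gauss, mul_assoc, ← Complex.exp_add]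
  congr 1
  push_cast
  ring

lemma gabor_shift_eq (s x ω : ℝ) :
    gabor (fun t => gauss (t - s)) x ω =
      ((2 : ℂ) ^ ((1 : ℂ) / 4) * ((2 : ℂ) ^ ((1 : ℂ) / 4) *
        ((Real.pi : ℂ) / -(-2 * (Real.pi : ℂ))) ^ ((1 : ℂ) / 2))) *
      Complex.exp ((-(Real.pi : ℂ) * s ^ 2 - Real.pi * x ^ 2) -
        (2 * (Real.pi : ℂ) * s + 2 * Real.pi * x - 2 * Real.pi * Complex.I * ω) ^ 2 /
          (4 * (-2 * (Real.pi : ℂ)))) := by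
  unfold gabor
  simp_rw [integrand_eq s x ω]
  rw [integral_const_mul, integral_cexp_quadratic hb_neg]
  ring

lemma gauss_self (t : ℝ) : gauss t = gauss (t - 0) := by norm_num

/-- If 0 < γ < δ e^{-(π/a)(R - 1/(2a))} with 0 < δ < 1, then on any bounded Ω contained in
the strip (-R,R) × ℝ: (1-δ)^p |𝒢φ|^p ≤ |𝒢f_±|^p ≤ (1+δ)^p |𝒢φ|^p. -/
theorem gabor_counterexample_weight_comparison (a R δ γ p : ℝ) (ha : 0 < a)
    (hδ0 : 0 < δ) (hδ1 : δ < 1) (hp : 1 ≤ p)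
    (Ω : Set (ℝ × ℝ)) (hΩb : Bornology.IsBounded Ω)
    (hΩs : Ω ⊆ Set.Ioo (-R) R ×ˢ (Set.univ : Set ℝ))
    (hγ0 : 0 < γ) (hγ : γ < δ * Real.exp (-(Real.pi / a) * (R - 1 / (2 * a))))
    (ε : ℝ) (hε : ε = 1 ∨ ε = -1) (f : ℝ → ℂ)
    (hf : f = fun t => gauss t + (ε : ℂ) * Complex.I * (γ : ℂ) * gauss (t - 1 / a)) :
    ∀ x ω : ℝ, (x, ω) ∈ Ω →
      (1 - δ) ^ p * ‖gabor gauss x ω‖ ^ p ≤ ‖gabor f x ω‖ ^ p ∧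
        ‖gabor f x ω‖ ^ p ≤ (1 + δ) ^ p * ‖gabor gauss x ω‖ ^ p := by
  intro x ω hxω
  have ha' : (a : ℝ) ≠ 0 := ha.ne'
  have hxR : x < R := (hΩs hxω).1.2
  -- linearity of the Gabor transform
  have hint : ∀ s : ℝ, Integrable (fun t : ℝ =>
      gauss (t - s) * Complex.exp (-(Real.pi : ℂ) * ((t : ℂ) - (x : ℂ)) ^ 2) *
        Complex.exp (-2 * (Real.pi : ℂ) * Complex.I * (t : ℂ) * (ω : ℂ))) := by
    intro s
    simp_rw [integrand_eq s x ω]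
    exact (integrable_cexp_quadratic' hb_neg _ _).const_mul _
  have hgauss0 : gabor gauss x ω = gabor (fun t => gauss (t - 0)) x ω := by
    simp only [sub_zero]
  have hsplit : gabor f x ω = gabor (fun t => gauss (t - 0)) x ω +
      (ε : ℂ) * Complex.I * γ * gabor (fun t => gauss (t - 1 / a)) x ω := by
    unfold gabor
    rw [hf]
    have heq : ∀ t : ℝ,
        (gauss t + (ε : ℂ) * Complex.I * γ * gauss (t - 1 / a)) *
            Complex.exp (-(Real.pi : ℂ) * ((t : ℂ) - (x : ℂ)) ^ 2) *
            Complex.exp (-2 * (Real.pi : ℂ) * Complex.I * (t : ℂ) * (ω : ℂ)) =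
          gauss (t - 0) * Complex.exp (-(Real.pi : ℂ) * ((t : ℂ) - (x : ℂ)) ^ 2) *
              Complex.exp (-2 * (Real.pi : ℂ) * Complex.I * (t : ℂ) * (ω : ℂ)) +
            (ε : ℂ) * Complex.I * γ *
              (gauss (t - 1 / a) * Complex.exp (-(Real.pi : ℂ) * ((t : ℂ) - (x : ℂ)) ^ 2) *
                Complex.exp (-2 * (Real.pi : ℂ) * Complex.I * (t : ℂ) * (ω : ℂ))) := by
      intro t; rw [sub_zero]; ring
    simp only [heq]
    rw [integral_add (hint 0) ((hint (1 / a)).const_mul _), integral_const_mul]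
    ring
  -- the factor z
  set Δ : ℂ := ((Real.pi / a * x - Real.pi / (2 * a ^ 2) : ℝ) : ℂ) +
      ((-(Real.pi / a) * ω : ℝ) : ℂ) * Complex.I with hΔ
  have hratio : gabor (fun t => gauss (t - 1 / a)) x ω =
      gabor (fun t => gauss (t - 0)) x ω * Complex.exp Δ := by
    have hkey : Complex.exp ((-(Real.pi : ℂ) * (1 / a : ℝ) ^ 2 - Real.pi * x ^ 2) -
        (2 * (Real.pi : ℂ) * (1 / a : ℝ) + 2 * Real.pi * x - 2 * Real.pi * Complex.I * ω) ^ 2 /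
          (4 * (-2 * (Real.pi : ℂ)))) =
        Complex.exp ((-(Real.pi : ℂ) * (0 : ℝ) ^ 2 - Real.pi * x ^ 2) -
          (2 * (Real.pi : ℂ) * (0 : ℝ) + 2 * Real.pi * x - 2 * Real.pi * Complex.I * ω) ^ 2 /
            (4 * (-2 * (Real.pi : ℂ)))) * Complex.exp Δ := by
      rw [← Complex.exp_add]
      congr 1
      have hπ : (Real.pi : ℂ) ≠ 0 := by exact_mod_cast Real.pi_ne_zero
      have haC : (a : ℂ) ≠ 0 := by exact_mod_cast ha'
      rw [hΔ]
      push_cast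
      field_simp [hπ, haC]
      ring
    rw [gabor_shift_eq, gabor_shift_eq, hkey]
    ring
  set G : ℂ := gabor (fun t => gauss (t - 0)) x ω with hG
  have hfG : gabor f x ω = G * (1 + (ε : ℂ) * Complex.I * γ * Complex.exp Δ) := by
    rw [hsplit, hratio]; ring
  set z : ℂ := (ε : ℂ) * Complex.I * γ * Complex.exp Δ with hz
  -- |z| ≤ δ
  have hre : Δ.re = Real.pi / a * x - Real.pi / (2 * a ^ 2) := by
    rw [hΔ]
    simp only [Complex.add_re, Complex.mul_re, Complex.ofReal_re, Complex.ofReal_im,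
      Complex.I_re, Complex.I_im]
    ring
  have habsz : ‖z‖ = γ * Real.exp (Real.pi / a * x - Real.pi / (2 * a ^ 2)) := by
    rw [hz, norm_mul, norm_mul, norm_mul, Complex.norm_exp, hre]
    rcases hε with h | h <;> simp [h, abs_of_pos hγ0]
  have hzle : ‖z‖ ≤ δ := by
    rw [habsz]
    have h1 : γ * Real.exp (Real.pi / a * x - Real.pi / (2 * a ^ 2)) <
        δ * Real.exp (-(Real.pi / a) * (R - 1 / (2 * a))) *
          Real.exp (Real.pi / a * x - Real.pi / (2 * a ^ 2)) := by
      apply mul_lt_mul_of_pos_right hγ (Real.exp_pos _)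
    have h2 : δ * Real.exp (-(Real.pi / a) * (R - 1 / (2 * a))) *
        Real.exp (Real.pi / a * x - Real.pi / (2 * a ^ 2)) ≤ δ := by
      rw [mul_assoc, ← Real.exp_add]
      have harg : -(Real.pi / a) * (R - 1 / (2 * a)) +
          (Real.pi / a * x - Real.pi / (2 * a ^ 2)) = Real.pi / a * (x - R) := by
        field_simp
        ring
      rw [harg]
      have : Real.exp (Real.pi / a * (x - R)) ≤ 1 := by
        apply Real.exp_le_one_iff.mpr
        apply mul_nonpos_of_nonneg_of_nonpos
        · positivity
        · linarith
      nlinarith [hδ0.le]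
    linarith
  -- modulus comparison
  have habsf : ‖gabor f x ω‖ = ‖G‖ * ‖1 + z‖ := by
    rw [hfG, norm_mul]
  have hAnn : 0 ≤ ‖G‖ := norm_nonneg _
  have hup : ‖1 + z‖ ≤ 1 + δ := by
    calc ‖1 + z‖ ≤ ‖(1 : ℂ)‖ + ‖z‖ := norm_add_le _ _
    _ ≤ 1 + δ := by simp; linarith
  have hlo : 1 - δ ≤ ‖1 + z‖ := by
    have : ‖(1 : ℂ)‖ - ‖z‖ ≤ ‖1 + z‖ := by
      have h := norm_add_le (1 + z) (-z)
      simp only [add_neg_cancel_right] at h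
      simp only [norm_neg] at h
      linarith
    simp only [norm_one] at this
    linarith
  have hG' : ‖gabor gauss x ω‖ = ‖G‖ := by rw [hgauss0]
  constructor
  · rw [hG', ← Real.mul_rpow (by linarith) hAnn]
    apply Real.rpow_le_rpow (mul_nonneg (by linarith) hAnn) _ (by linarith)
    rw [habsf]
    calc (1 - δ) * ‖G‖ ≤ ‖1 + z‖ * ‖G‖ :=
          mul_le_mul_of_nonneg_right hlo hAnn
    _ = ‖G‖ * ‖1 + z‖ := mul_comm _ _
  · rw [hG', ← Real.mul_rpow (by linarith) hAnn]
    apply Real.rpow_le_rpow (norm_nonneg _) _ (by linarith)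
    rw [habsf]
    calc ‖G‖ * ‖1 + z‖ ≤ ‖G‖ * (1 + δ) :=
          mul_le_mul_of_nonneg_left hup hAnn
    _ = (1 + δ) * ‖G‖ := mul_comm _ _
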